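/- Let F be a totally real field, 𝔤 an integral ideal, 𝔞 a fractional ideal, χ a Hecke character of conductor 𝔤, ξ ∈ 𝕋^𝔞_0[𝔤] a primitive 𝔤-torsion point, and 𝔟 an integral ideal prime to 𝔤. Define ξ^𝔟 ∈ 𝕋^{𝔞𝔟}[𝔤] as the restriction of ξ along the inclusion 𝔞𝔟 ⊆ 𝔞 (inducing 𝔞𝔟/𝔤𝔞𝔟 ≅ 𝔞/𝔤𝔞), and the Gauss sum g(χ, ξ) := ∑_{β ∈ 𝔞/𝔤𝔞} χ_𝔞(β) ξ(−β). Then g(χ, ξ^𝔟) = χ(𝔟)^{-1} g(χ, ξ). -/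

import Mathlib

open scoped nonZeroDivisors
open NumberField FractionalIdeal

/-- `x ∈ F` is totally positive: every real embedding sends it to a positive real. -/
def IsTotPos (F : Type*) [Field F] (x : F) : Prop := ∀ τ : F →+* ℝ, 0 < τ x

lemma exists_mem_totPos (F : Type*) [Field F] [NumberField F]
    (J : FractionalIdeal (𝓞 F)⁰ F) (hJ : J ≠ 0) :
    ∃ γ ∈ J, γ ≠ 0 ∧ ∀ τ : F →+* ℝ, 0 < τ γ := by
  have hex : ∃ x ∈ J, x ≠ 0 := by
    by_contra hc
    push_neg at hc
    refine hJ ?_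
    ext x
    simp only [mem_zero_iff]
    exact ⟨fun hx => hc x hx, fun h => h ▸ Submodule.zero_mem (J : Submodule (𝓞 F) F)⟩
  obtain ⟨x, hxJ, hx0⟩ := hex
  obtain ⟨⟨y, d⟩, h⟩ := IsLocalization.surj (𝓞 F)⁰ x
  have hd0 : (algebraMap (𝓞 F) F d) ≠ 0 := by
    simpa using nonZeroDivisors.ne_zero d.2
  have hy0 : (algebraMap (𝓞 F) F y) ≠ 0 := by
    rw [← h]; exact mul_ne_zero hx0 hd0
  have key2 : x * algebraMap (𝓞 F) F (y * d) = (algebraMap (𝓞 F) F y)^2 := by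
    rw [_root_.map_mul, ← mul_assoc, mul_right_comm, h]; ring
  refine ⟨x * algebraMap (𝓞 F) F (y * d), ?_, ?_, ?_⟩
  · have := Submodule.smul_mem (J : Submodule (𝓞 F) F) (y * ↑d) hxJ
    rwa [Algebra.smul_def, mul_comm] at this
  · rw [key2]; exact pow_ne_zero 2 hy0
  · intro τ
    rw [key2, map_pow]
    exact pow_two_pos_of_ne_zero (fun h0 => hy0 (τ.injective (h0.trans τ.map_zero.symm)))

lemma exists_add_totPos (F : Type*) [Field F] [NumberField F]
    (J : FractionalIdeal (𝓞 F)⁰ F) (hJ : J ≠ 0) (β : F) :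
    ∃ γ ∈ J, IsTotPos F (β + γ) := by
  obtain ⟨γ0, hγ0J, hγ00, hγ0pos⟩ := exists_mem_totPos F J hJ
  have : Finite (F →+* ℝ) := by
    have : Function.Injective (fun τ : F →+* ℝ => (Complex.ofRealHom : ℝ →+* ℂ).comp τ) := by
      intro a b hab
      ext x
      exact Complex.ofReal_injective (RingHom.congr_fun hab x)
    exact Finite.of_injective _ this
  have := Fintype.ofFinite (F →+* ℝ)
  set n : ℕ := (Finset.univ.sup fun τ : F →+* ℝ => ⌈(-τ β) / τ γ0⌉₊) + 1 with hn
  refine ⟨(n : F) * γ0, ?_, ?_⟩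
  · have := Submodule.smul_mem (J : Submodule (𝓞 F) F) (n : 𝓞 F) hγ0J
    rwa [Algebra.smul_def, map_natCast] at this
  · intro τ
    have h1 : (-τ β) / τ γ0 < n := by
      calc (-τ β) / τ γ0 ≤ ⌈(-τ β) / τ γ0⌉₊ := Nat.le_ceil _
      _ ≤ (Finset.univ.sup fun τ : F →+* ℝ => ⌈(-τ β) / τ γ0⌉₊) :=
          Nat.cast_le.mpr (Finset.le_sup (f := fun τ : F →+* ℝ => ⌈(-τ β) / τ γ0⌉₊) (Finset.mem_univ τ))
      _ < n := by exact_mod_cast Nat.lt_succ_self _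
    have h2 : -τ β < n * τ γ0 := (div_lt_iff₀ (hγ0pos τ)).mp h1
    have h3 : τ (β + (n : F) * γ0) = τ β + n * τ γ0 := by
      rw [_root_.map_add, _root_.map_mul, map_natCast]
    rw [h3]
    linarith


set_option maxHeartbeats 1000000 in
/-- **Behaviour of Gauss sums under the action of ideal classes.**
`F` totally real, `𝔤 ≠ 0` an integral ideal, `𝔞 ≠ 0` a fractional ideal, `χ` a Hecke
character of conductor `𝔤` (extended by zero), `ξ ∈ 𝕋^𝔞_0[𝔤]` a primitive `𝔤`-torsion
point, and `𝔟` an integral ideal prime to `𝔤`.  Let `ξ^𝔟 ∈ 𝕋^{𝔞𝔟}[𝔤]` be the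
restriction of `ξ` along `𝔞𝔟 ⊆ 𝔞` and `g(χ,ξ) = ∑_{β ∈ 𝔞/𝔤𝔞} χ_𝔞(β) ξ(−β)` the Gauss
sum.  Then `g(χ, ξ^𝔟) = χ(𝔟)⁻¹ g(χ, ξ)`. -/
theorem gauss_sum_action
    (F : Type*) [Field F] [NumberField F]
    (htr : ∀ v : NumberField.InfinitePlace F, v.IsReal)
    (𝔤 : Ideal (𝓞 F)) (h𝔤 : 𝔤 ≠ ⊥)
    (𝔞 : FractionalIdeal (𝓞 F)⁰ F) (h𝔞 : 𝔞 ≠ 0)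
    (𝔟 : Ideal (𝓞 F)) (h𝔟 : 𝔟 ≠ ⊥) (h𝔟𝔤 : IsCoprime 𝔟 𝔤)
    -- `χ`, a finite Hecke character mod `𝔤` on ideals, extended by zero:
    (χ : Ideal (𝓞 F) → ℂ)
    (hχmul : ∀ I J, χ (I * J) = χ I * χ J)
    (hχzero : ∀ I, ¬ IsCoprime I 𝔤 → χ I = 0)
    (hχne : ∀ I, IsCoprime I 𝔤 → χ I ≠ 0)
    (hχray : ∀ y : 𝓞 F, IsTotPos F (y : F) → y - 1 ∈ 𝔤 → χ (Ideal.span {y}) = 1)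
    -- the induced functions `χ_𝔞` on `𝔞/𝔤𝔞` and `χ_{𝔞𝔟}` on `𝔞𝔟/𝔤𝔞𝔟`:
    (χa χab : F → ℂ)
    (hχaper : ∀ α γ : F, γ ∈ (𝔤 : FractionalIdeal (𝓞 F)⁰ F) * 𝔞 → χa (α + γ) = χa α)
    (hχaval : ∀ α ∈ 𝔞, IsTotPos F α → ∀ I : Ideal (𝓞 F),
      (I : FractionalIdeal (𝓞 F)⁰ F) = 𝔞⁻¹ * spanSingleton (𝓞 F)⁰ α → χa α = χ I)
    (hχabper : ∀ α γ : F,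
      γ ∈ (𝔤 : FractionalIdeal (𝓞 F)⁰ F) * (𝔞 * (𝔟 : FractionalIdeal (𝓞 F)⁰ F)) →
      χab (α + γ) = χab α)
    (hχabval : ∀ α ∈ 𝔞 * (𝔟 : FractionalIdeal (𝓞 F)⁰ F), IsTotPos F α →
      ∀ I : Ideal (𝓞 F),
      (I : FractionalIdeal (𝓞 F)⁰ F) =
        (𝔞 * (𝔟 : FractionalIdeal (𝓞 F)⁰ F))⁻¹ * spanSingleton (𝓞 F)⁰ α → χab α = χ I)
    -- `ξ`, a primitive `𝔤`-torsion point of `𝕋^𝔞`: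
    (ξ : F → ℂ)
    (hξadd : ∀ α ∈ 𝔞, ∀ β ∈ 𝔞, ξ (α + β) = ξ α * ξ β)
    (hξone : ξ 0 = 1)
    (hξper : ∀ α ∈ 𝔞, ∀ γ ∈ (𝔤 : FractionalIdeal (𝓞 F)⁰ F) * 𝔞, ξ (α + γ) = ξ α)
    (hξprim : ∀ 𝔤' : Ideal (𝓞 F), 𝔤 < 𝔤' →
      ∃ α ∈ 𝔞, ∃ γ ∈ (𝔤' : FractionalIdeal (𝓞 F)⁰ F) * 𝔞, ξ (α + γ) ≠ ξ α)
    -- sets of representatives `B` of `𝔞/𝔤𝔞` and `B'` of `𝔞𝔟/𝔤𝔞𝔟`: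
    (B B' : Finset F)
    (hB1 : ∀ β ∈ B, β ∈ 𝔞)
    (hB2 : ∀ α ∈ 𝔞, ∃! β, β ∈ B ∧ α - β ∈ (𝔤 : FractionalIdeal (𝓞 F)⁰ F) * 𝔞)
    (hB'1 : ∀ β ∈ B', β ∈ 𝔞 * (𝔟 : FractionalIdeal (𝓞 F)⁰ F))
    (hB'2 : ∀ α ∈ 𝔞 * (𝔟 : FractionalIdeal (𝓞 F)⁰ F), ∃! β, β ∈ B' ∧
      α - β ∈ (𝔤 : FractionalIdeal (𝓞 F)⁰ F) * (𝔞 * (𝔟 : FractionalIdeal (𝓞 F)⁰ F))) :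
    ∑ β ∈ B', χab β * ξ (-β) = (χ 𝔟)⁻¹ * ∑ β ∈ B, χa β * ξ (-β) := by
  set G : FractionalIdeal (𝓞 F)⁰ F := ↑𝔤 with hG
  set AB : FractionalIdeal (𝓞 F)⁰ F := 𝔞 * ↑𝔟 with hABdef
  have h𝔟0 : (↑𝔟 : FractionalIdeal (𝓞 F)⁰ F) ≠ 0 := by
    simpa using h𝔟
  have h𝔤0 : G ≠ 0 := by
    simp only [hG]; simpa using h𝔤
  have hAB0 : AB ≠ 0 := mul_ne_zero h𝔞 h𝔟0
  have hGAB0 : G * AB ≠ 0 := mul_ne_zero h𝔤0 hAB0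
  -- inclusions
  have hABle : AB ≤ 𝔞 := by
    calc AB ≤ 𝔞 * 1 := mul_right_mono (a := 𝔞) coeIdeal_le_one
    _ = 𝔞 := mul_one 𝔞
  have hGABle : G * AB ≤ G * 𝔞 := mul_right_mono (a := G) hABle
  have hGABleAB : G * AB ≤ AB := by
    calc G * AB ≤ 1 * AB := mul_left_mono (a := AB) coeIdeal_le_one
    _ = AB := one_mul AB
  -- coprimality: get p ∈ 𝔟, q ∈ 𝔤 with p + q = 1
  obtain ⟨a, b, hab⟩ := id h𝔟𝔤
  have h1mem : (1 : 𝓞 F) ∈ a * 𝔟 + b * 𝔤 := by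
    rw [hab, Ideal.one_eq_top]; exact Submodule.mem_top
  obtain ⟨p, hp, q, hq, hpq⟩ := Submodule.mem_sup.mp h1mem
  have hp𝔟 : p ∈ 𝔟 := (Ideal.mul_le_right : a * 𝔟 ≤ 𝔟) hp
  have hq𝔤 : q ∈ 𝔤 := (Ideal.mul_le_right : b * 𝔤 ≤ 𝔤) hq
  have hpmem : algebraMap (𝓞 F) F p ∈ (↑𝔟 : FractionalIdeal (𝓞 F)⁰ F) := by
    rw [mem_coeIdeal]; exact ⟨p, hp𝔟, rfl⟩
  have hqmem : algebraMap (𝓞 F) F q ∈ G := by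
    rw [hG, mem_coeIdeal]; exact ⟨q, hq𝔤, rfl⟩
  have hpq1 : algebraMap (𝓞 F) F p + algebraMap (𝓞 F) F q = 1 := by
    rw [← _root_.map_add, hpq, _root_.map_one]
  -- intersection: G*𝔞 ∩ AB ⊆ G*AB
  have hcap : ∀ x : F, x ∈ G * 𝔞 → x ∈ AB → x ∈ G * AB := by
    intro x hx1 hx2
    have e : x = algebraMap (𝓞 F) F p * x + algebraMap (𝓞 F) F q * x := by
      rw [← add_mul, hpq1, one_mul]
    have m1 : algebraMap (𝓞 F) F p * x ∈ G * AB := by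
      have h1 : algebraMap (𝓞 F) F p * x ∈ (↑𝔟 : FractionalIdeal (𝓞 F)⁰ F) * (G * 𝔞) :=
        mul_mem_mul hpmem hx1
      have h2 : (↑𝔟 : FractionalIdeal (𝓞 F)⁰ F) * (G * 𝔞) = G * AB := by
        rw [hABdef]; ring
      rwa [h2] at h1
    have m2 : algebraMap (𝓞 F) F q * x ∈ G * AB := mul_mem_mul hqmem hx2
    rw [e]
    exact Submodule.add_mem ((G * AB : FractionalIdeal (𝓞 F)⁰ F) : Submodule (𝓞 F) F) m1 m2
  -- surjection: every β ∈ 𝔞 is congruent mod G*𝔞 to some α ∈ AB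
  have hsplit : ∀ β : F, β ∈ 𝔞 → ∃ α, α ∈ AB ∧ β - α ∈ G * 𝔞 := by
    intro β hβ
    refine ⟨algebraMap (𝓞 F) F p * β, ?_, ?_⟩
    · have h1 : algebraMap (𝓞 F) F p * β ∈ (↑𝔟 : FractionalIdeal (𝓞 F)⁰ F) * 𝔞 :=
        mul_mem_mul hpmem hβ
      have h2 : (↑𝔟 : FractionalIdeal (𝓞 F)⁰ F) * 𝔞 = AB := by rw [hABdef]; ring
      rwa [h2] at h1
    · have e : β - algebraMap (𝓞 F) F p * β = algebraMap (𝓞 F) F q * β := by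
        linear_combination (-β) * hpq1
      rw [e]
      exact mul_mem_mul hqmem hβ
  have hχ𝔟 : χ 𝔟 ≠ 0 := hχne 𝔟 h𝔟𝔤
  -- main termwise computation
  have main : ∀ β' β : F, β' ∈ AB → β ∈ 𝔞 → β' - β ∈ G * 𝔞 →
      χab β' * ξ (-β') = (χ 𝔟)⁻¹ * (χa β * ξ (-β)) := by
    intro β' β hβ'AB hβA hd
    -- ξ part
    have hξeq : ξ (-β') = ξ (-β) := by
      have hnβ : -β ∈ 𝔞 := Submodule.neg_mem (𝔞 : Submodule (𝓞 F) F) hβA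
      have hdneg : β - β' ∈ G * 𝔞 := by
        have := Submodule.neg_mem ((G * 𝔞 : FractionalIdeal (𝓞 F)⁰ F) : Submodule (𝓞 F) F) hd
        rwa [neg_sub] at this
      have := hξper (-β) hnβ (β - β') hdneg
      rwa [show -β + (β - β') = -β' by ring] at this
    -- χ part: pick totally positive representative
    obtain ⟨γ, hγ, hTP⟩ := exists_add_totPos F (G * AB) hGAB0 β'
    set α : F := β' + γ with hα
    have hγGA : γ ∈ G * 𝔞 := hGABle hγ
    have hαAB : α ∈ AB := Submodule.add_mem ((AB : FractionalIdeal (𝓞 F)⁰ F) : Submodule (𝓞 F) F)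
      hβ'AB (hGABleAB hγ)
    have hαA : α ∈ 𝔞 := hABle hαAB
    -- equalities from periodicity
    have e1 : χab β' = χab α := (hχabper β' γ hγ).symm
    have e2 : χa β = χa α := by
      have f1 : χa β' = χa β := by
        have := hχaper β (β' - β) hd
        rwa [show β + (β' - β) = β' by ring] at this
      have f2 : χa α = χa β' := hχaper β' γ hγGA
      rw [f2, f1]
    -- the integral ideal I'
    have hspan : spanSingleton (𝓞 F)⁰ α ≤ AB := spanSingleton_le_iff_mem.mpr hαAB
    have hle1 : AB⁻¹ * spanSingleton (𝓞 F)⁰ α ≤ 1 := by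
      calc AB⁻¹ * spanSingleton (𝓞 F)⁰ α ≤ AB⁻¹ * AB := mul_right_mono (a := AB⁻¹) hspan
      _ = 1 := by rw [mul_comm, mul_inv_cancel₀ hAB0]
    obtain ⟨I', hI'⟩ := le_one_iff_exists_coeIdeal.mp hle1
    have hv1 : χab α = χ I' := hχabval α hαAB hTP I' hI'
    have hcoe : ((𝔟 * I' : Ideal (𝓞 F)) : FractionalIdeal (𝓞 F)⁰ F)
        = 𝔞⁻¹ * spanSingleton (𝓞 F)⁰ α := by
      rw [coeIdeal_mul, hI']
      calc (↑𝔟 : FractionalIdeal (𝓞 F)⁰ F) * (AB⁻¹ * spanSingleton (𝓞 F)⁰ α)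
          = (𝔞⁻¹ * spanSingleton (𝓞 F)⁰ α) * ((↑𝔟 : FractionalIdeal (𝓞 F)⁰ F) * (↑𝔟 : FractionalIdeal (𝓞 F)⁰ F)⁻¹) := by
            rw [hABdef, mul_inv]; ring
      _ = 𝔞⁻¹ * spanSingleton (𝓞 F)⁰ α := by
            rw [mul_inv_cancel₀ h𝔟0, mul_one]
    have hv2 : χa α = χ (𝔟 * I') := hχaval α hαA hTP (𝔟 * I') hcoe
    have hfinal : χab β' = (χ 𝔟)⁻¹ * χa β := by
      rw [e1, hv1, e2, hv2, hχmul]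
      field_simp
    rw [hfinal, hξeq]
    ring
  -- the bijection B' → B
  have hmemA : ∀ β' ∈ B', β' ∈ 𝔞 := fun β' h => hABle (hB'1 β' h)
  rw [Finset.mul_sum]
  refine Finset.sum_bij (fun β' h => (hB2 β' (hmemA β' h)).choose) ?_ ?_ ?_ ?_
  · intro β' h
    exact (hB2 β' (hmemA β' h)).choose_spec.1.1
  · -- injective
    intro a₁ h₁ a₂ h₂ heq
    have heq' : (hB2 a₁ (hmemA a₁ h₁)).choose = (hB2 a₂ (hmemA a₂ h₂)).choose := heq
    set c := (hB2 a₁ (hmemA a₁ h₁)).choose with hc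
    have s₁ := (hB2 a₁ (hmemA a₁ h₁)).choose_spec.1
    have s₂ := (hB2 a₂ (hmemA a₂ h₂)).choose_spec.1
    rw [← heq'] at s₂
    have hdGA : a₁ - a₂ ∈ G * 𝔞 := by
      have := Submodule.sub_mem ((G * 𝔞 : FractionalIdeal (𝓞 F)⁰ F) : Submodule (𝓞 F) F) s₁.2 s₂.2
      rwa [show a₁ - c - (a₂ - c) = a₁ - a₂ by ring] at this
    have hdAB : a₁ - a₂ ∈ AB := Submodule.sub_mem ((AB : FractionalIdeal (𝓞 F)⁰ F) : Submodule (𝓞 F) F)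
      (hB'1 a₁ h₁) (hB'1 a₂ h₂)
    have hdGAB : a₁ - a₂ ∈ G * AB := hcap _ hdGA hdAB
    have h0 : a₁ - a₁ ∈ G * AB := by
      rw [sub_self]
      exact Submodule.zero_mem ((G * AB : FractionalIdeal (𝓞 F)⁰ F) : Submodule (𝓞 F) F)
    exact ((hB'2 a₁ (hB'1 a₁ h₁)).unique ⟨h₁, h0⟩ ⟨h₂, hdGAB⟩)
  · -- surjective
    intro β hβB
    obtain ⟨α, hαAB, hαd⟩ := hsplit β (hB1 β hβB)
    obtain ⟨β', ⟨hβ'B', hd⟩, _⟩ := hB'2 α hαAB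
    refine ⟨β', hβ'B', ?_⟩
    have hdGA : β' - β ∈ G * 𝔞 := by
      have h1 : α - β' ∈ G * 𝔞 := hGABle hd
      have hadd := Submodule.add_mem ((G * 𝔞 : FractionalIdeal (𝓞 F)⁰ F) : Submodule (𝓞 F) F) hαd h1
      have h2 := Submodule.neg_mem ((G * 𝔞 : FractionalIdeal (𝓞 F)⁰ F) : Submodule (𝓞 F) F) hadd
      rwa [show -(β - α + (α - β')) = β' - β by ring] at h2
    exact ((hB2 β' (hmemA β' hβ'B')).choose_spec.2 β ⟨hβB, hdGA⟩).symm
  · -- termwise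
    intro β' h
    have s := (hB2 β' (hmemA β' h)).choose_spec.1
    exact main β' _ (hB'1 β' h) (hB1 _ s.1) s.2
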